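/- arXiv:2002.01508 — 3 statements merged into one kernel-verified Lean document; each statement's English description precedes it below -/
import Mathlib

section
/- Almost surely, lim_{R→∞} (1/R^d) · #{n ∈ L : |n| > R and |n + ξ_n| ≤ R} = 0. -/
open MeasureTheory Filter Topology ProbabilityTheory Pointwise
open scoped ENNReal

noncomputable section

/-- The lattice point of `L = ℤ-span of b` with coordinates `n`. -/
def latPt {d : ℕ} (b : Module.Basis (Fin d) ℝ (EuclideanSpace ℝ (Fin d))) (n : Fin d → ℤ) :
    EuclideanSpace ℝ (Fin d) := ∑ i, (n i : ℝ) • b i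

namespace BoundaryCountAux

lemma sum_int_aux {q : ℝ} (hq : 1 < q) :
    Summable (fun m : ℤ => ((1:ℝ) + |(m:ℝ)|) ^ (-q)) := by
  have hnat : ∀ a : ℝ, 0 ≤ a → Summable (fun n : ℕ => ((n:ℝ) + (1+a)) ^ (-q)) := by
    intro a ha
    have := (Real.summable_one_div_nat_add_rpow (1+a) q).2 hq
    refine this.congr fun n => ?_
    rw [one_div, abs_of_nonneg (by positivity), Real.rpow_neg (by positivity)]
  apply Summable.of_nat_of_neg_add_one
  · refine (hnat 0 le_rfl).congr fun n => ?_
    simp [Nat.abs_cast, add_comm]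
  · refine (hnat 1 zero_le_one).congr fun n => ?_
    push_cast
    rw [abs_of_nonpos (by linarith [Nat.cast_nonneg (α := ℝ) n])]
    ring_nf

set_option maxHeartbeats 1000000 in
lemma sum_pi_aux : ∀ (d : ℕ) {q : ℝ}, 1 < q →
    Summable (fun n : Fin d → ℤ => ∏ i, ((1:ℝ) + |(n i : ℝ)|) ^ (-q)) := by
  intro d
  induction d with
  | zero => intro q hq; exact Summable.of_finite
  | succ d ih =>
    intro q hq
    have h2 : Summable (fun x : ℤ × (Fin d → ℤ) =>
        (((1:ℝ) + |(x.1:ℝ)|) ^ (-q)) * ∏ i, ((1:ℝ) + |(x.2 i : ℝ)|) ^ (-q)) :=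
      Summable.mul_of_nonneg (f := fun m : ℤ => ((1:ℝ) + |(m:ℝ)|) ^ (-q))
        (g := fun v : Fin d → ℤ => ∏ i, ((1:ℝ) + |(v i : ℝ)|) ^ (-q))
        (sum_int_aux hq) (ih hq) (fun m => by positivity)
        (fun v => Finset.prod_nonneg fun i _ => by positivity)
    have hinj : Function.Injective (fun n : Fin (d+1) → ℤ => (n 0, Fin.tail n)) := by
      intro a b h
      funext i
      induction i using Fin.cases with
      | zero => exact congrArg Prod.fst h
      | succ j => exact congrFun (congrArg Prod.snd h) j
    have h3 := h2.comp_injective hinj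
    refine h3.congr fun n => ?_
    rw [Function.comp_apply, Fin.prod_univ_succ]
    rfl

lemma latPt_equivFun {d : ℕ} (b : Module.Basis (Fin d) ℝ (EuclideanSpace ℝ (Fin d))) (n : Fin d → ℤ) :
    b.equivFun (latPt b n) = fun i => (n i : ℝ) := by
  have : latPt b n = b.equivFun.symm (fun i => (n i : ℝ)) := by
    rw [Module.Basis.equivFun_symm_apply]; rfl
  rw [this, LinearEquiv.apply_symm_apply]

lemma latPt_injective {d : ℕ} (b : Module.Basis (Fin d) ℝ (EuclideanSpace ℝ (Fin d))) :
    Function.Injective (latPt b) := by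
  intro n m h
  have := congrArg b.equivFun h
  rw [latPt_equivFun, latPt_equivFun] at this
  funext i
  exact_mod_cast congrFun this i

lemma exists_c1 {d : ℕ} (b : Module.Basis (Fin d) ℝ (EuclideanSpace ℝ (Fin d))) :
    ∃ c1 : ℝ, 1 ≤ c1 ∧ ∀ (n : Fin d → ℤ) (i : Fin d), |(n i : ℝ)| ≤ c1 * ‖latPt b n‖ := by
  set T := LinearMap.toContinuousLinearMap b.equivFun.toLinearMap with hT
  refine ⟨‖T‖ + 1, le_add_of_nonneg_left (norm_nonneg _), fun n i => ?_⟩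
  have h1 : |(n i : ℝ)| ≤ ‖T (latPt b n)‖ := by
    have : T (latPt b n) = fun i => (n i : ℝ) := latPt_equivFun b n
    calc |(n i : ℝ)| = ‖(fun i => (n i : ℝ)) i‖ := rfl
      _ ≤ ‖(fun i => (n i : ℝ) : Fin d → ℝ)‖ := norm_le_pi_norm (fun j : Fin d => ((n j : ℝ))) i
      _ = ‖T (latPt b n)‖ := by rw [this]
  refine h1.trans ((T.le_opNorm _).trans ?_)
  have : (0:ℝ) ≤ ‖latPt b n‖ := norm_nonneg _
  nlinarith [norm_nonneg T]

lemma sum_latPt {d : ℕ} (hd : 0 < d) (b : Module.Basis (Fin d) ℝ (EuclideanSpace ℝ (Fin d)))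
    {p : ℝ} (hp : (d:ℝ) < p) :
    Summable (fun n : Fin d → ℤ => (1 + ‖latPt b n‖) ^ (-p)) := by
  have hd' : (0:ℝ) < d := by exact_mod_cast hd
  have hq : 1 < p / d := (one_lt_div hd').2 hp
  obtain ⟨c1, hc1, hbound⟩ := exists_c1 b
  have hc1' : (0:ℝ) < c1 := lt_of_lt_of_le one_pos hc1
  refine Summable.of_nonneg_of_le (fun n => by positivity)
    (fun n => ?_) ((sum_pi_aux d hq).mul_left (c1 ^ p))
  set A := 1 + ‖latPt b n‖ with hA
  have hA0 : (0:ℝ) < A := by positivity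
  have step1 : ∏ i, ((1:ℝ) + |(n i : ℝ)|) ≤ (c1 * A) ^ d := by
    rw [← Fin.prod_const d (c1 * A)]
    refine Finset.prod_le_prod (fun i _ => by positivity) (fun i _ => ?_)
    have := hbound n i
    nlinarith [norm_nonneg (latPt b n)]
  have step2 : ((c1 * A) ^ d : ℝ) ^ (-(p/d)) ≤ (∏ i, ((1:ℝ) + |(n i : ℝ)|)) ^ (-(p/d)) := by
    refine Real.rpow_le_rpow_of_nonpos (Finset.prod_pos fun i _ => by positivity) step1 ?_
    exact neg_nonpos.mpr (by positivity)
  have e1 : ((c1 * A) ^ d : ℝ) ^ (-(p/d)) = (c1 ^ p)⁻¹ * A ^ (-p) := by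
    rw [← Real.rpow_natCast (c1 * A) d, ← Real.rpow_mul (by positivity)]
    have : (d : ℝ) * -(p/d) = -p := by field_simp
    rw [this, Real.mul_rpow hc1'.le hA0.le, Real.rpow_neg hc1'.le]
  have e2 : (∏ i, ((1:ℝ) + |(n i : ℝ)|)) ^ (-(p/d)) = ∏ i, ((1:ℝ) + |(n i : ℝ)|) ^ (-(p/d)) := by
    rw [← Real.finset_prod_rpow _ _ (fun i _ => by positivity)]
  calc A ^ (-p) = c1 ^ p * (((c1 * A) ^ d : ℝ) ^ (-(p/d))) := by
        rw [e1, ← mul_assoc, mul_inv_cancel₀ (by positivity), one_mul]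
    _ ≤ c1 ^ p * ∏ i, ((1:ℝ) + |(n i : ℝ)|) ^ (-(p/d)) := by
        rw [← e2]; exact mul_le_mul_of_nonneg_left step2 (by positivity)

lemma finite_le {d : ℕ} (b : Module.Basis (Fin d) ℝ (EuclideanSpace ℝ (Fin d))) (r : ℝ) :
    {n : Fin d → ℤ | ‖latPt b n‖ ≤ r}.Finite := by
  obtain ⟨c1, hc1, hbound⟩ := exists_c1 b
  have hc10 : 0 < c1 := lt_of_lt_of_le one_pos hc1
  set c : ℝ := c1 * max r 0 with hc
  have hfin : ∀ i : Fin d, {m : ℤ | |(m:ℝ)| ≤ c}.Finite := by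
    intro i
    refine Set.Finite.subset (Set.finite_Icc (-⌈c⌉) ⌈c⌉) ?_
    intro m hm
    simp only [Set.mem_setOf_eq] at hm
    have h1 : (|m| : ℝ) ≤ c := by exact_mod_cast hm
    have h2 : |m| ≤ ⌈c⌉ := by exact_mod_cast h1.trans (Int.le_ceil c)
    rw [Set.mem_Icc]
    constructor <;> [linarith [neg_abs_le m]; linarith [le_abs_self m]]
  refine Set.Finite.subset (Set.Finite.pi (fun i => hfin i)) ?_
  intro n hn
  simp only [Set.mem_setOf_eq] at hn
  intro i _
  refine (hbound n i).trans ?_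
  have h0 : ‖latPt b n‖ ≤ max r 0 := le_trans hn (le_max_left _ _)
  exact mul_le_mul_of_nonneg_left h0 hc10.le

lemma latPt_mem_span {d : ℕ} (b : Module.Basis (Fin d) ℝ (EuclideanSpace ℝ (Fin d))) (n : Fin d → ℤ) :
    latPt b n ∈ Submodule.span ℤ (Set.range b) := by
  refine Submodule.sum_mem _ fun i _ => ?_
  have : (n i : ℝ) • b i = (n i) • b i := by
    rw [Int.cast_smul_eq_zsmul]
  rw [this]
  exact Submodule.smul_mem _ (n i) (Submodule.subset_span (Set.mem_range_self i))

lemma translates_disjoint {d : ℕ} (b : Module.Basis (Fin d) ℝ (EuclideanSpace ℝ (Fin d)))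
    {n m : Fin d → ℤ} (hnm : n ≠ m) :
    Disjoint (latPt b n +ᵥ ZSpan.fundamentalDomain b) (latPt b m +ᵥ ZSpan.fundamentalDomain b) := by
  rw [Set.disjoint_left]
  rintro y hyn hym
  obtain ⟨v, -, huniq⟩ := ZSpan.exist_unique_vadd_mem_fundamentalDomain b y
  have h1 : ∀ k : Fin d → ℤ, y ∈ latPt b k +ᵥ ZSpan.fundamentalDomain b →
      (⟨-latPt b k, Submodule.neg_mem _ (latPt_mem_span b k)⟩ :
        Submodule.span ℤ (Set.range b)) +ᵥ y ∈ ZSpan.fundamentalDomain b := by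
    intro k hy
    obtain ⟨f, hf, rfl⟩ := hy
    show (-latPt b k) +ᵥ (latPt b k +ᵥ f) ∈ ZSpan.fundamentalDomain b
    have : (-latPt b k) +ᵥ (latPt b k +ᵥ f) = f := by
      simp only [vadd_eq_add]
      abel
    rwa [this]
  have e1 := huniq _ (h1 n hyn)
  have e2 := huniq _ (h1 m hym)
  have : latPt b n = latPt b m := by
    have := e1.trans e2.symm
    have h := congrArg
      (fun v : Submodule.span ℤ (Set.range b) => -(v : EuclideanSpace ℝ (Fin d))) this
    simpa using h
  exact hnm (latPt_injective b this)

lemma card_annulus {d : ℕ} (b : Module.Basis (Fin d) ℝ (EuclideanSpace ℝ (Fin d)))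
    (hcovol : volume (ZSpan.fundamentalDomain b) = 1)
    {C s t : ℝ} (hC : ∀ y ∈ ZSpan.fundamentalDomain b, ‖y‖ ≤ C)
    (hCs : C ≤ s) (hst : s ≤ t) (hC0 : 0 ≤ C) :
    (({n : Fin d → ℤ | s < ‖latPt b n‖ ∧ ‖latPt b n‖ ≤ t}).ncard : ℝ) ≤
      (volume (Metric.closedBall (0 : EuclideanSpace ℝ (Fin d)) (t + C))).toReal -
      (volume (Metric.ball (0 : EuclideanSpace ℝ (Fin d)) (s - C))).toReal := by
  set D := ZSpan.fundamentalDomain b with hD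
  set S := {n : Fin d → ℤ | s < ‖latPt b n‖ ∧ ‖latPt b n‖ ≤ t} with hS
  have hSfin : S.Finite := (finite_le b t).subset (fun n hn => hn.2)
  set F := hSfin.toFinset with hF
  have hDmeas : MeasurableSet D := ZSpan.fundamentalDomain_measurableSet b
  have htrans_meas : ∀ n : Fin d → ℤ, MeasurableSet (latPt b n +ᵥ D) := by
    intro n
    have : latPt b n +ᵥ D = (fun y => -latPt b n + y) ⁻¹' D := by
      ext y
      simp [Set.mem_vadd_set_iff_neg_vadd_mem, vadd_eq_add]
    rw [this]
    exact hDmeas.preimage (measurable_const_add _)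
  have hvol1 : ∀ n : Fin d → ℤ, volume (latPt b n +ᵥ D) = 1 := by
    intro n
    rw [measure_vadd, hcovol]
  have hdisj : (F : Set (Fin d → ℤ)).PairwiseDisjoint (fun n => latPt b n +ᵥ D) := by
    intro n _ m _ hnm
    exact translates_disjoint b hnm
  have hcard : (F.card : ℝ≥0∞) = volume (⋃ n ∈ F, (latPt b n +ᵥ D)) := by
    rw [measure_biUnion_finset hdisj (fun n _ => htrans_meas n)]
    simp [hvol1]
  have hsub : (⋃ n ∈ F, (latPt b n +ᵥ D)) ⊆
      Metric.closedBall (0 : EuclideanSpace ℝ (Fin d)) (t + C) \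
      Metric.ball (0 : EuclideanSpace ℝ (Fin d)) (s - C) := by
    intro y hy
    simp only [Set.mem_iUnion] at hy
    obtain ⟨n, hnF, hyn⟩ := hy
    obtain ⟨f, hf, rfl⟩ := hyn
    have hnS : n ∈ S := by rwa [hF, Set.Finite.mem_toFinset] at hnF
    have hfC : ‖f‖ ≤ C := hC f hf
    constructor
    · rw [Metric.mem_closedBall, dist_zero_right]
      calc ‖latPt b n +ᵥ f‖ = ‖latPt b n + f‖ := rfl
        _ ≤ ‖latPt b n‖ + ‖f‖ := norm_add_le _ _
        _ ≤ t + C := add_le_add hnS.2 hfC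
    · rw [Metric.mem_ball, dist_zero_right, not_lt]
      calc s - C ≤ ‖latPt b n‖ - ‖f‖ := by
            have : s ≤ ‖latPt b n‖ := le_of_lt hnS.1
            linarith [hfC]
        _ ≤ ‖latPt b n + f‖ := by
            have h := abs_norm_sub_norm_le (latPt b n + f) (latPt b n)
            rw [add_sub_cancel_left] at h
            have h2 := abs_le.mp h
            linarith [h2.1]
        _ = ‖latPt b n +ᵥ f‖ := rfl
  have hballsub : Metric.ball (0 : EuclideanSpace ℝ (Fin d)) (s - C) ⊆
      Metric.closedBall (0 : EuclideanSpace ℝ (Fin d)) (t + C) :=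
    (Metric.ball_subset_closedBall).trans (Metric.closedBall_subset_closedBall (by linarith))
  have hUdisj : Disjoint (⋃ n ∈ F, (latPt b n +ᵥ D))
      (Metric.ball (0 : EuclideanSpace ℝ (Fin d)) (s - C)) := by
    rw [Set.disjoint_left]
    intro y hy hball
    exact (hsub hy).2 hball
  have hmeasU : MeasurableSet (⋃ n ∈ F, (latPt b n +ᵥ D)) :=
    MeasurableSet.biUnion F.countable_toSet (fun n _ => htrans_meas n)
  have hle : (F.card : ℝ≥0∞) + volume (Metric.ball (0 : EuclideanSpace ℝ (Fin d)) (s - C)) ≤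
      volume (Metric.closedBall (0 : EuclideanSpace ℝ (Fin d)) (t + C)) := by
    rw [hcard, ← measure_union hUdisj measurableSet_ball]
    refine measure_mono ?_
    rw [Set.union_subset_iff]
    exact ⟨fun y hy => (hsub hy).1, hballsub⟩
  have hfin1 : volume (Metric.closedBall (0 : EuclideanSpace ℝ (Fin d)) (t + C)) ≠ ⊤ :=
    (IsCompact.measure_ne_top (isCompact_closedBall _ _))
  have hfin2 : volume (Metric.ball (0 : EuclideanSpace ℝ (Fin d)) (s - C)) ≠ ⊤ :=
    ne_top_of_le_ne_top hfin1 (measure_mono hballsub)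
  have hcardS : S.ncard = F.card := Set.ncard_eq_toFinset_card S hSfin
  rw [hcardS]
  have h2 := ENNReal.toReal_mono hfin1 hle
  rw [ENNReal.toReal_add (by simp) hfin2, ENNReal.toReal_natCast] at h2
  linarith

lemma integrable_one_add {E : Type*} [NormedAddCommGroup E] [MeasurableSpace E]
    (μ : Measure E) [IsProbabilityMeasure μ] [OpensMeasurableSpace E]
    {p : ℝ} (hp : 0 < p) (hmom : Integrable (fun x => ‖x‖ ^ p) μ) :
    Integrable (fun x => (1 + ‖x‖) ^ p) μ := by
  have hmeas : AEStronglyMeasurable (fun x : E => (1 + ‖x‖) ^ p) μ := by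
    refine Continuous.aestronglyMeasurable ?_
    refine Continuous.rpow_const (continuous_const.add continuous_norm) ?_
    intro x; left; positivity
  refine Integrable.mono' ((integrable_const ((2:ℝ)^p)).add (hmom.const_mul ((2:ℝ)^p))) hmeas ?_
  refine ae_of_all _ fun x => ?_
  rw [Real.norm_of_nonneg (by positivity)]
  show (1 + ‖x‖ : ℝ) ^ p ≤ (2:ℝ)^p + (2:ℝ)^p * ‖x‖ ^ p
  rcases le_total ‖x‖ 1 with h | h
  · have h1 : (1 + ‖x‖ : ℝ) ^ p ≤ (2:ℝ) ^ p :=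
      Real.rpow_le_rpow (by positivity) (by linarith) hp.le
    have h2 : 0 ≤ (2:ℝ)^p * ‖x‖ ^ p := by positivity
    linarith
  · have h1 : (1 + ‖x‖ : ℝ) ^ p ≤ (2 * ‖x‖) ^ p :=
      Real.rpow_le_rpow (by positivity) (by linarith) hp.le
    rw [Real.mul_rpow (by norm_num) (norm_nonneg x)] at h1
    have h2 : (0:ℝ) ≤ (2:ℝ)^p := by positivity
    linarith

lemma markov_bound {E : Type*} [NormedAddCommGroup E] [MeasurableSpace E]
    [OpensMeasurableSpace E]
    (μ : Measure E) [IsProbabilityMeasure μ] {p : ℝ} (hp : 0 < p)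
    (hint : Integrable (fun x => (1 + ‖x‖) ^ p) μ) (c a : ℝ) (hc : 1 ≤ c) (ha : 0 ≤ a) :
    μ {x : E | 1 + a ≤ c * (1 + ‖x‖)} ≤
      ENNReal.ofReal ((c ^ p * ∫ x, (1 + ‖x‖) ^ p ∂μ) * (1 + a) ^ (-p)) := by
  set t : ℝ := (1 + a) ^ p with ht
  have ht0 : 0 < t := Real.rpow_pos_of_pos (by linarith) p
  have hsub : {x : E | 1 + a ≤ c * (1 + ‖x‖)} ⊆ {x : E | t ≤ (c * (1 + ‖x‖)) ^ p} := by
    intro x hx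
    exact Real.rpow_le_rpow (by linarith) hx hp.le
  have hintf : Integrable (fun x => (c * (1 + ‖x‖)) ^ p) μ := by
    refine (hint.const_mul (c ^ p)).congr (ae_of_all _ fun x => ?_)
    show c ^ p * (1 + ‖x‖) ^ p = (c * (1 + ‖x‖)) ^ p
    rw [← Real.mul_rpow (by linarith) (by positivity)]
  have hmark := mul_meas_ge_le_integral_of_nonneg
    (ae_of_all μ fun x => Real.rpow_nonneg (by positivity) p) hintf t
  have hI : ∫ x, (c * (1 + ‖x‖)) ^ p ∂μ = c ^ p * ∫ x, (1 + ‖x‖) ^ p ∂μ := by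
    rw [← integral_const_mul]
    exact integral_congr_ae (ae_of_all _ fun x => by
      show (c * (1 + ‖x‖)) ^ p = c ^ p * (1 + ‖x‖) ^ p
      rw [Real.mul_rpow (by linarith) (by positivity)])
  have hmono := measure_mono (μ := μ) hsub
  have hne : μ {x : E | t ≤ (c * (1 + ‖x‖)) ^ p} ≠ ⊤ := measure_ne_top μ _
  have hI0 : 0 ≤ ∫ x, (1 + ‖x‖) ^ p ∂μ :=
    integral_nonneg fun x => Real.rpow_nonneg (by positivity) p
  refine (ENNReal.le_ofReal_iff_toReal_le (measure_ne_top μ _) (by positivity)).2 ?_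
  · have h1 : (μ {x : E | 1 + a ≤ c * (1 + ‖x‖)}).toReal ≤
        (μ {x : E | t ≤ (c * (1 + ‖x‖)) ^ p}).toReal :=
      ENNReal.toReal_mono hne hmono
    have h2 : (μ {x : E | t ≤ (c * (1 + ‖x‖)) ^ p}).toReal ≤
        (c ^ p * ∫ x, (1 + ‖x‖) ^ p ∂μ) / t := by
      rw [le_div_iff₀ ht0]
      calc (μ {x | t ≤ (c * (1 + ‖x‖)) ^ p}).toReal * t
          = t * (μ {x | t ≤ (c * (1 + ‖x‖)) ^ p}).toReal := mul_comm _ _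
        _ ≤ ∫ x, (c * (1 + ‖x‖)) ^ p ∂μ := hmark
        _ = _ := hI
    have h3 : (c ^ p * ∫ x, (1 + ‖x‖) ^ p ∂μ) / t =
        (c ^ p * ∫ x, (1 + ‖x‖) ^ p ∂μ) * (1 + a) ^ (-p) := by
      rw [ht, Real.rpow_neg (by linarith), div_eq_mul_inv]
    linarith

end BoundaryCountAux

open BoundaryCountAux

/-- Almost surely, `(1/R^d) · #{n ∈ L : |n| > R, |n + ξ_n| ≤ R} → 0` as `R → ∞`. -/
theorem boundary_count_incoming
    {d : ℕ} (hd : 0 < d)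
    (b : Module.Basis (Fin d) ℝ (EuclideanSpace ℝ (Fin d)))
    (hcovol : volume (ZSpan.fundamentalDomain b) = 1)
    {Ω : Type*} [MeasureSpace Ω] [IsProbabilityMeasure (ℙ : Measure Ω)]
    (ξ : (Fin d → ℤ) → Ω → EuclideanSpace ℝ (Fin d))
    (hmeas : ∀ n, Measurable (ξ n))
    (hindep : iIndepFun ξ ℙ)
    (μξ : Measure (EuclideanSpace ℝ (Fin d))) [IsProbabilityMeasure μξ]
    (hdist : ∀ n, Measure.map (ξ n) ℙ = μξ)
    (ε : ℝ) (hε : 0 < ε)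
    (hmom : Integrable (fun x => ‖x‖ ^ ((d : ℝ) + ε)) μξ) :
    ∀ᵐ ω ∂ℙ,
      Tendsto
        (fun R : ℝ =>
          (Nat.card {n : Fin d → ℤ |
              R < ‖latPt b n‖ ∧ ‖latPt b n + ξ n ω‖ ≤ R} : ℝ) / R ^ d)
        atTop (𝓝 0) := by
  classical
  haveI : Nonempty (Fin d) := Fin.pos_iff_nonempty.mp hd
  haveI : Nontrivial (EuclideanSpace ℝ (Fin d)) := by
    infer_instance
  set p : ℝ := (d : ℝ) + ε with hp'
  have hp0 : 0 < p := by positivity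
  have hdp : (d : ℝ) < p := lt_add_of_pos_right _ hε
  have hint : Integrable (fun x => (1 + ‖x‖) ^ p) μξ := integrable_one_add μξ hp0 hmom
  set I : ℝ := ∫ x, (1 + ‖x‖) ^ p ∂μξ with hIdef
  -- the exceptional sets
  set B : ℕ → Ω → Set (Fin d → ℤ) := fun k ω =>
    {n | 1 + ‖latPt b n‖ ≤ ((k:ℝ) + 3) * (1 + ‖ξ n ω‖)} with hBdef
  have hBC : ∀ᵐ ω ∂ℙ, ∀ k : ℕ, (B k ω).Finite := by
    rw [ae_all_iff]
    intro k
    have hsum : Summable (fun n : Fin d → ℤ =>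
        ((((k:ℝ)+3) ^ p * I) * (1 + ‖latPt b n‖) ^ (-p))) :=
      (sum_latPt hd b hdp).mul_left _
    have hterm : ∀ n : Fin d → ℤ,
        ℙ {ω | 1 + ‖latPt b n‖ ≤ ((k:ℝ) + 3) * (1 + ‖ξ n ω‖)} ≤
        ENNReal.ofReal ((((k:ℝ)+3) ^ p * I) * (1 + ‖latPt b n‖) ^ (-p)) := by
      intro n
      have hAmeas : MeasurableSet
          {x : EuclideanSpace ℝ (Fin d) | 1 + ‖latPt b n‖ ≤ ((k:ℝ) + 3) * (1 + ‖x‖)} :=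
        measurableSet_le measurable_const
          (((continuous_norm.measurable).const_add 1).const_mul _)
      have hmap : ℙ {ω | 1 + ‖latPt b n‖ ≤ ((k:ℝ) + 3) * (1 + ‖ξ n ω‖)} =
          μξ {x | 1 + ‖latPt b n‖ ≤ ((k:ℝ) + 3) * (1 + ‖x‖)} := by
        rw [← hdist n, Measure.map_apply (hmeas n) hAmeas]
        rfl
      rw [hmap]
      exact markov_bound μξ hp0 hint _ _ (by linarith [Nat.cast_nonneg (α := ℝ) k]) (norm_nonneg _)
    have hne : (∑' n : Fin d → ℤ,
        ℙ {ω | 1 + ‖latPt b n‖ ≤ ((k:ℝ) + 3) * (1 + ‖ξ n ω‖)}) ≠ ∞ := by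
      refine ne_of_lt (lt_of_le_of_lt (ENNReal.tsum_le_tsum hterm) ?_)
      rw [← ENNReal.ofReal_tsum_of_nonneg (fun n => by positivity) hsum]
      exact ENNReal.ofReal_lt_top
    exact ae_finite_setOf_mem hne
  -- geometric constants
  obtain ⟨C0, hC0⟩ := isBounded_iff_forall_norm_le.1 (ZSpan.fundamentalDomain_isBounded b)
  set C : ℝ := max C0 0 with hCdef
  have hC : ∀ y ∈ ZSpan.fundamentalDomain b, ‖y‖ ≤ C :=
    fun y hy => (hC0 y hy).trans (le_max_left _ _)
  have hCnn : 0 ≤ C := le_max_right _ _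
  set W : ℝ := (volume (Metric.ball (0 : EuclideanSpace ℝ (Fin d)) 1)).toReal with hWdef
  have hW0 : 0 ≤ W := ENNReal.toReal_nonneg
  have hvol_cb : ∀ t : ℝ, 0 ≤ t →
      (volume (Metric.closedBall (0 : EuclideanSpace ℝ (Fin d)) t)).toReal = t ^ d * W := by
    intro t ht
    rw [Measure.addHaar_closedBall _ _ ht, finrank_euclideanSpace_fin,
      ENNReal.toReal_mul, ENNReal.toReal_ofReal (by positivity)]
  have hvol_b : ∀ t : ℝ, 0 ≤ t →
      (volume (Metric.ball (0 : EuclideanSpace ℝ (Fin d)) t)).toReal = t ^ d * W := by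
    intro t ht
    rw [Measure.addHaar_ball _ _ ht, finrank_euclideanSpace_fin,
      ENNReal.toReal_mul, ENNReal.toReal_ofReal (by positivity)]
  set ak : ℕ → ℝ := fun k => ((k:ℝ) + 3) / ((k:ℝ) + 2) with hakdef
  have hak1 : ∀ k : ℕ, 1 < ak k := fun k => (one_lt_div (by positivity)).2 (by linarith)
  have haktend : Tendsto (fun k : ℕ => (ak k ^ d - 1) * W) atTop (𝓝 0) := by
    have h1 : Tendsto (fun k : ℕ => ((k:ℝ) + 2)) atTop atTop :=
      tendsto_atTop_add_const_right _ 2 tendsto_natCast_atTop_atTop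
    have h2 : Tendsto (fun k : ℕ => ((k:ℝ) + 2)⁻¹) atTop (𝓝 0) := h1.inv_tendsto_atTop
    have h3 : Tendsto ak atTop (𝓝 1) := by
      have heq : ∀ k : ℕ, ak k = 1 + ((k:ℝ) + 2)⁻¹ := by
        intro k
        rw [hakdef]
        field_simp
        ring
      rw [show (1:ℝ) = 1 + 0 by ring]
      exact Tendsto.congr (fun k => (heq k).symm) (tendsto_const_nhds.add h2)
    have h4 : Tendsto (fun k : ℕ => (ak k ^ d - 1) * W) atTop (𝓝 ((1 ^ d - 1) * W)) :=
      (((h3.pow d).sub tendsto_const_nhds).mul_const W)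
    simpa using h4
  -- main argument
  filter_upwards [hBC] with ω hω
  rw [Metric.tendsto_nhds]
  intro η hη
  obtain ⟨k, hk⟩ : ∃ k : ℕ, (ak k ^ d - 1) * W < η / 2 :=
    (haktend.eventually_lt_const (half_pos hη)).exists
  -- the total bound function
  set tot : ℝ → ℝ := fun R =>
    ((B k ω).ncard : ℝ) / R ^ d + ((ak k * R + C) ^ d - (R - C) ^ d) * W / R ^ d with htot
  have hT1 : Tendsto (fun R : ℝ => ((B k ω).ncard : ℝ) / R ^ d) atTop (𝓝 0) :=
    Tendsto.div_atTop (tendsto_const_nhds (x := ((B k ω).ncard : ℝ))) (tendsto_pow_atTop hd.ne')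
  have hT2 : Tendsto (fun R : ℝ => ((ak k * R + C) ^ d - (R - C) ^ d) * W / R ^ d)
      atTop (𝓝 ((ak k ^ d - 1) * W)) := by
    have heq : ∀ᶠ R : ℝ in atTop,
        ((ak k + C / R) ^ d - (1 - C / R) ^ d) * W =
        ((ak k * R + C) ^ d - (R - C) ^ d) * W / R ^ d := by
      filter_upwards [eventually_gt_atTop (0:ℝ)] with R hR
      have hRne : R ≠ 0 := ne_of_gt hR
      have e1 : ak k + C / R = (ak k * R + C) / R := by field_simp
      have e2 : 1 - C / R = (R - C) / R := by field_simp
      rw [e1, e2, div_pow, div_pow, div_sub_div_same, div_mul_eq_mul_div]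
    have hCdiv : Tendsto (fun R : ℝ => C / R) atTop (𝓝 0) :=
      Tendsto.div_atTop (tendsto_const_nhds (x := C)) tendsto_id
    have hlim : Tendsto (fun R : ℝ => ((ak k + C / R) ^ d - (1 - C / R) ^ d) * W) atTop
        (𝓝 (((ak k + 0) ^ d - (1 - 0) ^ d) * W)) :=
      (((tendsto_const_nhds.add hCdiv).pow d).sub
        ((tendsto_const_nhds.sub hCdiv).pow d)).mul_const W
    refine Tendsto.congr' heq ?_
    simpa using hlim
  have hTtot : Tendsto tot atTop (𝓝 (0 + (ak k ^ d - 1) * W)) := hT1.add hT2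
  have hev : ∀ᶠ R : ℝ in atTop, tot R < η :=
    hTtot.eventually_lt_const (by linarith)
  filter_upwards [hev, eventually_ge_atTop (C + 1), eventually_ge_atTop (1:ℝ)]
    with R hRtot hRC hR1
  have hRpos : 0 < R := lt_of_lt_of_le one_pos hR1
  have hRd : (0:ℝ) < R ^ d := by positivity
  -- pointwise counting bound
  set cntSet := {n : Fin d → ℤ | R < ‖latPt b n‖ ∧ ‖latPt b n + ξ n ω‖ ≤ R} with hcntSet
  set ann := {n : Fin d → ℤ | R < ‖latPt b n‖ ∧ ‖latPt b n‖ ≤ ak k * R} with hann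
  have hsubset : cntSet ⊆ B k ω ∪ ann := by
    intro n hn
    obtain ⟨hn1, hn2⟩ := hn
    by_cases hcase : ‖latPt b n‖ ≤ ak k * R
    · exact Or.inr ⟨hn1, hcase⟩
    · left
      have hgt : ak k * R < ‖latPt b n‖ := not_le.mp hcase
      have hxi : ‖latPt b n‖ - ‖latPt b n + ξ n ω‖ ≤ ‖ξ n ω‖ := by
        have h := norm_sub_norm_le (latPt b n) (latPt b n + ξ n ω)
        have e : latPt b n - (latPt b n + ξ n ω) = -(ξ n ω) := by abel
        rwa [e, norm_neg] at h
      have hxi2 : ‖latPt b n‖ - R ≤ ‖ξ n ω‖ := by linarith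
      show 1 + ‖latPt b n‖ ≤ ((k:ℝ) + 3) * (1 + ‖ξ n ω‖)
      set K : ℝ := (k:ℝ) with hK
      have hK0 : (0:ℝ) ≤ K := Nat.cast_nonneg k
      have hKR : (K + 3) * R < ‖latPt b n‖ * (K + 2) := by
        have := hgt
        rw [hakdef] at this
        simp only [div_mul_eq_mul_div] at this
        exact (div_lt_iff₀ (by positivity)).1 this
      nlinarith [mul_le_mul_of_nonneg_left hxi2 (show (0:ℝ) ≤ K + 3 by positivity),
        norm_nonneg (ξ n ω), norm_nonneg (latPt b n)]
  have hannfin : ann.Finite := (finite_le b (ak k * R)).subset (fun n hn => hn.2)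
  have hcfin : cntSet.Finite := ((hω k).union hannfin).subset hsubset
  have hcnt1 : (Nat.card cntSet : ℝ) ≤ ((B k ω).ncard : ℝ) + (ann.ncard : ℝ) := by
    rw [Nat.card_coe_set_eq]
    have h1 : cntSet.ncard ≤ (B k ω ∪ ann).ncard :=
      Set.ncard_le_ncard hsubset ((hω k).union hannfin)
    have h2 : (B k ω ∪ ann).ncard ≤ (B k ω).ncard + ann.ncard := Set.ncard_union_le _ _
    exact_mod_cast le_trans h1 h2
  have hannbound : (ann.ncard : ℝ) ≤ ((ak k * R + C) ^ d - (R - C) ^ d) * W := by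
    have hCR : C ≤ R := by linarith
    have hRak : R ≤ ak k * R := le_mul_of_one_le_left hRpos.le (hak1 k).le
    have h := card_annulus b hcovol hC hCR hRak hCnn
    rw [hvol_cb _ (by nlinarith [(hak1 k).le]), hvol_b _ (by linarith)] at h
    calc (ann.ncard : ℝ) ≤ (ak k * R + C) ^ d * W - (R - C) ^ d * W := h
      _ = ((ak k * R + C) ^ d - (R - C) ^ d) * W := by ring
  -- conclude
  rw [Real.dist_eq, sub_zero, abs_of_nonneg (by positivity)]
  have hRtot' : ((B k ω).ncard : ℝ) / R ^ d +
      ((ak k * R + C) ^ d - (R - C) ^ d) * W / R ^ d < η := hRtot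
  refine lt_of_le_of_lt ?_ hRtot'
  calc (Nat.card cntSet : ℝ) / R ^ d
      ≤ (((B k ω).ncard : ℝ) + ((ak k * R + C) ^ d - (R - C) ^ d) * W) / R ^ d :=
        (div_le_div_iff_of_pos_right hRd).2 (by linarith)
    _ = ((B k ω).ncard : ℝ) / R ^ d + ((ak k * R + C) ^ d - (R - C) ^ d) * W / R ^ d :=
        add_div _ _ _

end
end

section
/- Let (μ_t)_{t>0} and (ν_t)_{t>0} be families of finite positive Borel measures on the fundamental domain D such that μ_t converges weak-star to a finite measure μ and ν_t converges weak-star to a finite measure ν as t → ∞. Then limsup_{t→∞} ρ(μ_t, ν_t) ≤ ρ(μ, ν). -/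
open MeasureTheory Filter Topology

noncomputable section


lemma sqrt_mul_le_aux (a b f g : ℝ) (ha : 0 ≤ a) (hb : 0 ≤ b) (hf : 0 ≤ f) (hg : 0 ≤ g)
    (hfg : 1 ≤ f * g) :
    Real.sqrt a * Real.sqrt b ≤ (a * f + b * g) / 2 := by
  have h1 : Real.sqrt a * Real.sqrt b = Real.sqrt (a * b) := (Real.sqrt_mul ha b).symm
  have h2 : Real.sqrt (a * b) ≤ Real.sqrt ((a * f) * (b * g)) :=
    Real.sqrt_le_sqrt (by nlinarith [mul_le_mul_of_nonneg_left hfg (mul_nonneg ha hb)])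
  have h3 : Real.sqrt ((a * f) * (b * g)) = Real.sqrt (a * f) * Real.sqrt (b * g) :=
    Real.sqrt_mul (by positivity) _
  have h4 := Real.sq_sqrt (mul_nonneg ha hf)
  have h5 := Real.sq_sqrt (mul_nonneg hb hg)
  nlinarith [sq_nonneg (Real.sqrt (a * f) - Real.sqrt (b * g))]

/-- a.e. the two RN derivatives w.r.t. the sum add to 1. -/
lemma rnDeriv_add_toReal {α : Type*} [MeasurableSpace α] (μ ν : Measure α)
    [IsFiniteMeasure μ] [IsFiniteMeasure ν] :
    ∀ᵐ x ∂(μ + ν), (μ.rnDeriv (μ + ν) x).toReal + (ν.rnDeriv (μ + ν) x).toReal = 1 := by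
  have h1 : μ.rnDeriv (μ + ν) + ν.rnDeriv (μ + ν) =ᵐ[μ + ν] (μ + ν).rnDeriv (μ + ν) :=
    (Measure.rnDeriv_add μ ν (μ + ν)).symm
  have h2 : (μ + ν).rnDeriv (μ + ν) =ᵐ[μ + ν] 1 := Measure.rnDeriv_self (μ + ν)
  have h3 := Measure.rnDeriv_lt_top μ (μ + ν)
  have h4 := Measure.rnDeriv_lt_top ν (μ + ν)
  filter_upwards [h1, h2, h3, h4] with x e1 e2 e3 e4
  have : μ.rnDeriv (μ + ν) x + ν.rnDeriv (μ + ν) x = 1 := by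
    simpa using e1.trans e2
  rw [← ENNReal.toReal_add e3.ne e4.ne, this, ENNReal.toReal_one]

/-- The affinity (Hellinger integral) of two measures, computed with respect to the
reference measure `μ + ν`: `ρ(μ,ν) = ∫ √(dμ/dσ) √(dν/dσ) dσ` with `σ = μ + ν`. -/
def affinity {α : Type*} [MeasurableSpace α] (μ ν : Measure α) : ℝ :=
  ∫ x, Real.sqrt ((μ.rnDeriv (μ + ν) x).toReal) *
    Real.sqrt ((ν.rnDeriv (μ + ν) x).toReal) ∂(μ + ν)

lemma affinity_le_half_add {α : Type*} [MeasurableSpace α] (μ ν : Measure α)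
    [IsFiniteMeasure μ] [IsFiniteMeasure ν] {f g : α → ℝ}
    (hfi : Integrable f μ) (hgi : Integrable g ν)
    (hf0 : ∀ x, 0 ≤ f x) (hg0 : ∀ x, 0 ≤ g x) (hfg : ∀ x, 1 ≤ f x * g x) :
    affinity μ ν ≤ (∫ x, f x ∂μ + ∫ x, g x ∂ν) / 2 := by
  set σ := μ + ν with hσ
  have hμσ : μ ≪ σ := Measure.absolutelyContinuous_of_le (Measure.le_add_right le_rfl)
  have hνσ : ν ≪ σ := Measure.absolutelyContinuous_of_le (Measure.le_add_left le_rfl)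
  set a : α → ℝ := fun x => (μ.rnDeriv σ x).toReal with haa
  set b : α → ℝ := fun x => (ν.rnDeriv σ x).toReal with hbb
  have hma : Measurable a := (Measure.measurable_rnDeriv μ σ).ennreal_toReal
  have hmb : Measurable b := (Measure.measurable_rnDeriv ν σ).ennreal_toReal
  have h1 : Integrable (fun x => (μ.rnDeriv σ x).toReal • f x) σ :=
    (MeasureTheory.integrable_rnDeriv_smul_iff hμσ).mpr hfi
  have h2 : Integrable (fun x => (ν.rnDeriv σ x).toReal • g x) σ :=
    (MeasureTheory.integrable_rnDeriv_smul_iff hνσ).mpr hgi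
  have hab : ∀ᵐ x ∂σ, a x + b x = 1 := rnDeriv_add_toReal μ ν
  have hL : Integrable (fun x => Real.sqrt (a x) * Real.sqrt (b x)) σ := by
    refine Integrable.mono' (integrable_const (1:ℝ)) ?_ ?_
    · exact ((hma.sqrt.mul hmb.sqrt)).aestronglyMeasurable
    · filter_upwards [hab] with x hx
      have ha0 : 0 ≤ a x := ENNReal.toReal_nonneg
      have hb0 : 0 ≤ b x := ENNReal.toReal_nonneg
      rw [Real.norm_eq_abs, abs_of_nonneg (mul_nonneg (Real.sqrt_nonneg _) (Real.sqrt_nonneg _))]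
      calc Real.sqrt (a x) * Real.sqrt (b x) ≤ Real.sqrt 1 * Real.sqrt 1 := by
            apply mul_le_mul (Real.sqrt_le_sqrt (by linarith)) (Real.sqrt_le_sqrt (by linarith))
              (Real.sqrt_nonneg _) (Real.sqrt_nonneg _)
        _ = 1 := by simp
  have key : affinity μ ν ≤ ∫ x, ((μ.rnDeriv σ x).toReal • f x + (ν.rnDeriv σ x).toReal • g x) / 2 ∂σ := by
    refine integral_mono hL ((h1.add h2).div_const 2) ?_
    intro x
    have := sqrt_mul_le_aux (a x) (b x) (f x) (g x) ENNReal.toReal_nonneg ENNReal.toReal_nonneg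
      (hf0 x) (hg0 x) (hfg x)
    simpa [smul_eq_mul, mul_comm] using this
  calc affinity μ ν ≤ _ := key
    _ = (∫ x, f x ∂μ + ∫ x, g x ∂ν) / 2 := by
        rw [integral_div, integral_add h1 h2, MeasureTheory.integral_rnDeriv_smul hμσ,
          MeasureTheory.integral_rnDeriv_smul hνσ]

lemma term_le_two (a b δ : ℝ) (ha0 : 0 ≤ a) (ha1 : a ≤ 1) (hb1 : b ≤ 1)
    (hδ0 : 0 < δ) (hδ1 : δ ≤ 1) (hb0 : 0 ≤ b) :
    a * Real.sqrt ((b + δ) / (a + δ)) ≤ 2 := by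
  have h1 : Real.sqrt ((b + δ) / (a + δ)) = Real.sqrt (b + δ) / Real.sqrt (a + δ) :=
    Real.sqrt_div (by linarith) _
  have h4 : 0 < Real.sqrt (a + δ) := Real.sqrt_pos.mpr (by linarith)
  have h2 : Real.sqrt (a + δ) ≤ Real.sqrt 2 := Real.sqrt_le_sqrt (by linarith)
  have h3 : Real.sqrt (b + δ) ≤ Real.sqrt 2 := Real.sqrt_le_sqrt (by linarith)
  have h5 : a ≤ Real.sqrt (a + δ) * Real.sqrt (a + δ) := by
    rw [Real.mul_self_sqrt (by linarith)]; linarith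
  have h6 : Real.sqrt 2 * Real.sqrt 2 = 2 := Real.mul_self_sqrt (by norm_num)
  have he : a * (Real.sqrt (b + δ) / Real.sqrt (a + δ)) = a * Real.sqrt (b + δ) / Real.sqrt (a + δ) := by
    ring
  rw [h1, he, div_le_iff₀ h4]
  have k1 : a * Real.sqrt (b + δ) ≤ (Real.sqrt (a + δ) * Real.sqrt (a + δ)) * Real.sqrt 2 :=
    mul_le_mul h5 h3 (Real.sqrt_nonneg _) (by positivity)
  nlinarith [k1, mul_le_mul_of_nonneg_right h2 (Real.sqrt_nonneg 2), h4.le,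
    mul_le_mul_of_nonneg_left (mul_le_mul_of_nonneg_right h2 (Real.sqrt_nonneg 2)) h4.le]

lemma tendsto_term (a b : ℝ) (ha : 0 ≤ a) (hb : 0 ≤ b) :
    Tendsto (fun n : ℕ => a * Real.sqrt ((b + 1 / (n + 1)) / (a + 1 / (n + 1)))) atTop
      (𝓝 (Real.sqrt a * Real.sqrt b)) := by
  rcases eq_or_lt_of_le ha with h | h
  · simp only [← h]
    simpa using tendsto_const_nhds
  · have hδ : Tendsto (fun n : ℕ => 1 / ((n : ℝ) + 1)) atTop (𝓝 0) :=
      tendsto_one_div_add_atTop_nhds_zero_nat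
    have hcont : Tendsto (fun δ : ℝ => a * Real.sqrt ((b + δ) / (a + δ))) (𝓝 0)
        (𝓝 (a * Real.sqrt (b / a))) := by
      have h1 : Tendsto (fun δ : ℝ => (b + δ) / (a + δ)) (𝓝 0) (𝓝 (b / a)) := by
        have hnum : Tendsto (fun δ : ℝ => b + δ) (𝓝 0) (𝓝 b) := by
          simpa using (continuous_add_left b).tendsto (0 : ℝ)
        have hden : Tendsto (fun δ : ℝ => a + δ) (𝓝 0) (𝓝 a) := by
          simpa using (continuous_add_left a).tendsto (0 : ℝ)
        exact hnum.div hden h.ne'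
      exact tendsto_const_nhds.mul (Real.continuous_sqrt.continuousAt.tendsto.comp h1)
    have hval : a * Real.sqrt (b / a) = Real.sqrt a * Real.sqrt b := by
      have hsa : Real.sqrt a ≠ 0 := ne_of_gt (Real.sqrt_pos.mpr h)
      have hms : Real.sqrt a * Real.sqrt a = a := Real.mul_self_sqrt ha
      rw [Real.sqrt_div hb]
      rw [← hms]
      rw [Real.sqrt_mul_self (Real.sqrt_nonneg a)]
      field_simp
    rw [← hval]
    exact hcont.comp hδ

lemma tendsto_F {α : Type*} [MeasurableSpace α] (μ ν : Measure α)
    [IsFiniteMeasure μ] [IsFiniteMeasure ν] :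
    Tendsto (fun n : ℕ => ∫ x,
        ((μ.rnDeriv (μ + ν) x).toReal *
          Real.sqrt (((ν.rnDeriv (μ + ν) x).toReal + 1 / (n + 1)) /
            ((μ.rnDeriv (μ + ν) x).toReal + 1 / (n + 1))) +
        (ν.rnDeriv (μ + ν) x).toReal *
          Real.sqrt (((μ.rnDeriv (μ + ν) x).toReal + 1 / (n + 1)) /
            ((ν.rnDeriv (μ + ν) x).toReal + 1 / (n + 1)))) ∂(μ + ν)) atTop
      (𝓝 (2 * affinity μ ν)) := by
  set σ := μ + ν with hσ
  set a : α → ℝ := fun x => (μ.rnDeriv σ x).toReal with haa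
  set b : α → ℝ := fun x => (ν.rnDeriv σ x).toReal with hbb
  have hma : Measurable a := (Measure.measurable_rnDeriv μ σ).ennreal_toReal
  have hmb : Measurable b := (Measure.measurable_rnDeriv ν σ).ennreal_toReal
  have hab : ∀ᵐ x ∂σ, a x + b x = 1 := rnDeriv_add_toReal μ ν
  have h2aff : 2 * affinity μ ν = ∫ x, 2 * (Real.sqrt (a x) * Real.sqrt (b x)) ∂σ := by
    rw [affinity, ← integral_const_mul]
  rw [h2aff]
  refine tendsto_integral_of_dominated_convergence (fun _ => (4:ℝ)) ?_ (integrable_const 4) ?_ ?_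
  · intro n
    refine Measurable.aestronglyMeasurable ?_
    exact (hma.mul (((hmb.add measurable_const).div (hma.add measurable_const)).sqrt)).add
      (hmb.mul (((hma.add measurable_const).div (hmb.add measurable_const)).sqrt))
  · intro n
    filter_upwards [hab] with x hx
    have ha0 : 0 ≤ a x := ENNReal.toReal_nonneg
    have hb0 : 0 ≤ b x := ENNReal.toReal_nonneg
    have hδ0 : 0 < 1 / ((n : ℝ) + 1) := by positivity
    have hδ1 : 1 / ((n : ℝ) + 1) ≤ 1 := by
      rw [div_le_one (by positivity)]; linarith [Nat.cast_nonneg (α := ℝ) n]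
    have t1 := term_le_two (a x) (b x) (1 / ((n : ℝ) + 1)) ha0 (by linarith) (by linarith) hδ0 hδ1 hb0
    have t2 := term_le_two (b x) (a x) (1 / ((n : ℝ) + 1)) hb0 (by linarith) (by linarith) hδ0 hδ1 ha0
    have p1 : 0 ≤ a x * Real.sqrt ((b x + 1 / ((n : ℝ) + 1)) / (a x + 1 / ((n : ℝ) + 1))) :=
      mul_nonneg ha0 (Real.sqrt_nonneg _)
    have p2 : 0 ≤ b x * Real.sqrt ((a x + 1 / ((n : ℝ) + 1)) / (b x + 1 / ((n : ℝ) + 1))) :=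
      mul_nonneg hb0 (Real.sqrt_nonneg _)
    rw [Real.norm_eq_abs, abs_of_nonneg (by positivity)]
    push_cast
    linarith
  · refine Eventually.of_forall fun x => ?_
    have ha0 : 0 ≤ a x := ENNReal.toReal_nonneg
    have hb0 : 0 ≤ b x := ENNReal.toReal_nonneg
    have t1 := tendsto_term (a x) (b x) ha0 hb0
    have t2 := tendsto_term (b x) (a x) hb0 ha0
    have := t1.add t2
    rw [mul_comm (Real.sqrt (b x)) (Real.sqrt (a x))] at this
    convert this using 2
    ring

lemma clamp_abs_le {c C h φ : ℝ} (hφ1 : c ≤ φ) (hφ2 : φ ≤ C) :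
    |max c (min C h) - φ| ≤ |h - φ| := by
  have e1 : max c (min C φ) = φ := by rw [min_eq_right hφ2, max_eq_right hφ1]
  have h2 : |min C h - min C φ| ≤ max |C - C| |h - φ| := abs_min_sub_min_le_max C h C φ
  rw [sub_self, abs_zero, max_eq_right (abs_nonneg _)] at h2
  calc |max c (min C h) - φ| = |max (min C h) c - max (min C φ) c| := by
        rw [max_comm (min C h) c, max_comm (min C φ) c, e1]
    _ ≤ |min C h - min C φ| := abs_max_sub_max_le_abs _ _ _
    _ ≤ |h - φ| := h2

lemma inv_sub_inv_abs_le' {c f φ : ℝ} (hc : 0 < c) (hf : c ≤ f) (hφ : c ≤ φ) :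
    |f⁻¹ - φ⁻¹| ≤ |f - φ| / c ^ 2 := by
  have hf0 : 0 < f := lt_of_lt_of_le hc hf
  have hφ0 : 0 < φ := lt_of_lt_of_le hc hφ
  have he : f⁻¹ - φ⁻¹ = (φ - f) / (f * φ) := by field_simp
  rw [he, abs_div, abs_of_pos (mul_pos hf0 hφ0), abs_sub_comm]
  apply div_le_div_of_nonneg_left (abs_nonneg _) (by positivity)
  nlinarith

lemma exists_test_functions {D : Type*} [TopologicalSpace D] [CompactSpace D]
    [TopologicalSpace.MetrizableSpace D] [MeasurableSpace D] [BorelSpace D]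
    (μ ν : Measure D) [IsFiniteMeasure μ] [IsFiniteMeasure ν] {ε : ℝ} (hε : 0 < ε) :
    ∃ f g : BoundedContinuousFunction D ℝ, (∀ x, 0 ≤ f x) ∧ (∀ x, 0 ≤ g x) ∧
      (∀ x, 1 ≤ f x * g x) ∧
      (∫ x, f x ∂μ + ∫ x, g x ∂ν) / 2 ≤ affinity μ ν + ε := by
  set σ := μ + ν with hσ
  have hμσ : μ ≪ σ := Measure.absolutelyContinuous_of_le (Measure.le_add_right le_rfl)
  have hνσ : ν ≪ σ := Measure.absolutelyContinuous_of_le (Measure.le_add_left le_rfl)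
  set a : D → ℝ := fun x => (μ.rnDeriv σ x).toReal with haa
  set b : D → ℝ := fun x => (ν.rnDeriv σ x).toReal with hbb
  have hma : Measurable a := (Measure.measurable_rnDeriv μ σ).ennreal_toReal
  have hmb : Measurable b := (Measure.measurable_rnDeriv ν σ).ennreal_toReal
  have hab : ∀ᵐ x ∂σ, a x + b x = 1 := rnDeriv_add_toReal μ ν
  -- step 1: pick n with F n ≤ 2 * affinity + ε
  obtain ⟨n, hn⟩ :=
    ((tendsto_F μ ν).eventually (eventually_le_nhds (lt_add_of_pos_right _ hε))).exists
  set δ : ℝ := 1 / ((n : ℝ) + 1) with hδdef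
  have hδ0 : 0 < δ := by positivity
  have hδ1 : δ ≤ 1 := by
    rw [hδdef, div_le_one (by positivity)]; linarith [Nat.cast_nonneg (α := ℝ) n]
  set φ : D → ℝ := fun x => Real.sqrt ((b x + δ) / (a x + δ)) with hφdef
  set ψ : D → ℝ := fun x => Real.sqrt ((a x + δ) / (b x + δ)) with hψdef
  have hmφ : Measurable φ := ((hmb.add measurable_const).div (hma.add measurable_const)).sqrt
  have hψφ : ∀ x, ψ x = (φ x)⁻¹ := by
    intro x
    have ha0 : (0:ℝ) ≤ a x := ENNReal.toReal_nonneg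
    have hb0 : (0:ℝ) ≤ b x := ENNReal.toReal_nonneg
    rw [hψdef, hφdef]
    simp only
    rw [← Real.sqrt_inv]
    congr 1
    rw [inv_div]
  set c : ℝ := Real.sqrt (δ / 2) with hcdef
  have hc0 : 0 < c := Real.sqrt_pos.mpr (by linarith)
  have hc1 : c ≤ 1 := by
    rw [hcdef, show (1:ℝ) = Real.sqrt 1 by simp]
    exact Real.sqrt_le_sqrt (by linarith)
  -- a.e. bounds on φ
  have hφbdd : ∀ᵐ x ∂σ, c ≤ φ x ∧ φ x ≤ c⁻¹ ∧ 0 ≤ a x ∧ a x ≤ 1 ∧ 0 ≤ b x ∧ b x ≤ 1 := by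
    filter_upwards [hab] with x hx
    have ha0 : (0:ℝ) ≤ a x := ENNReal.toReal_nonneg
    have hb0 : (0:ℝ) ≤ b x := ENNReal.toReal_nonneg
    have ha1 : a x ≤ 1 := by linarith
    have hb1 : b x ≤ 1 := by linarith
    have hden : 0 < a x + δ := by linarith
    have hl : δ / 2 ≤ (b x + δ) / (a x + δ) := by
      rw [div_le_div_iff₀ (by norm_num) hden]; nlinarith
    have hu : (b x + δ) / (a x + δ) ≤ 2 / δ := by
      rw [div_le_div_iff₀ hden hδ0]; nlinarith
    refine ⟨Real.sqrt_le_sqrt hl, ?_, ha0, ha1, hb0, hb1⟩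
    have : φ x ≤ Real.sqrt (2 / δ) := Real.sqrt_le_sqrt hu
    have he : Real.sqrt (2 / δ) = c⁻¹ := by
      rw [hcdef, ← Real.sqrt_inv, inv_div]
    rw [← he]; exact this
  have hφint : Integrable φ σ := by
    refine Integrable.mono' (integrable_const c⁻¹) hmφ.aestronglyMeasurable ?_
    filter_upwards [hφbdd] with x hx
    rw [Real.norm_eq_abs, abs_of_nonneg (Real.sqrt_nonneg _)]
    exact hx.2.1
  -- step 2: continuous approximation
  have hε₁ : 0 < ε * c ^ 2 / (2 * (1 + c ^ 2)) := by positivity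
  obtain ⟨h, hhint, hh⟩ := hφint.exists_boundedContinuous_integral_sub_le hε₁
  set ε₁ : ℝ := ε * c ^ 2 / (2 * (1 + c ^ 2)) with hε₁def
  -- the clamped function
  set f : D → ℝ := fun x => max c (min c⁻¹ (h x)) with hfdef
  have hfcont : Continuous f := continuous_const.max (continuous_const.min h.continuous)
  have hfc : ∀ x, c ≤ f x := fun x => le_max_left _ _
  have hfC : ∀ x, f x ≤ c⁻¹ := fun x => by
    apply max_le ?_ (min_le_left _ _)
    rw [← one_div]
    calc c ≤ 1 := hc1
      _ ≤ 1 / c := by rw [le_div_iff₀ hc0]; nlinarith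
  set g : D → ℝ := fun x => (f x)⁻¹ with hgdef
  have hgcont : Continuous g := hfcont.inv₀ (fun x => (lt_of_lt_of_le hc0 (hfc x)).ne')
  have hgC : ∀ x, g x ≤ c⁻¹ := fun x => by
    rw [hgdef]
    simp only
    rw [inv_le_inv₀ (lt_of_lt_of_le hc0 (hfc x)) hc0]
    exact hfc x
  have hg0 : ∀ x, 0 ≤ g x := fun x => inv_nonneg.mpr (le_trans hc0.le (hfc x))
  -- key a.e. pointwise bounds
  have hae1 : ∀ᵐ x ∂σ, a x * f x ≤ a x * φ x + |h x - φ x| := by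
    filter_upwards [hφbdd] with x ⟨h1, h2, ha0, ha1, _, _⟩
    have hclamp : |f x - φ x| ≤ |h x - φ x| := clamp_abs_le h1 h2
    nlinarith [le_abs_self (f x - φ x), abs_nonneg (f x - φ x), abs_nonneg (h x - φ x)]
  have hae2 : ∀ᵐ x ∂σ, b x * g x ≤ b x * ψ x + |h x - φ x| / c ^ 2 := by
    filter_upwards [hφbdd] with x ⟨h1, h2, _, _, hb0, hb1⟩
    have hclamp : |f x - φ x| ≤ |h x - φ x| := clamp_abs_le h1 h2
    have hinv : |(f x)⁻¹ - (φ x)⁻¹| ≤ |f x - φ x| / c ^ 2 :=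
      inv_sub_inv_abs_le' hc0 (hfc x) h1
    have hinv2 : |(f x)⁻¹ - (φ x)⁻¹| ≤ |h x - φ x| / c ^ 2 :=
      le_trans hinv (by gcongr)
    rw [hψφ x]
    have hgx : g x = (f x)⁻¹ := rfl
    rw [hgx]
    nlinarith [le_abs_self ((f x)⁻¹ - (φ x)⁻¹), abs_nonneg ((f x)⁻¹ - (φ x)⁻¹)]
  -- integrability facts
  have hmψ : Measurable ψ := ((hma.add measurable_const).div (hmb.add measurable_const)).sqrt
  have Ih : Integrable h σ := hh
  have Ihφ : Integrable (fun x => |h x - φ x|) σ := (Ih.sub hφint).abs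
  have Iaφ : Integrable (fun x => a x * φ x) σ := by
    refine Integrable.mono' (integrable_const c⁻¹) (hma.mul hmφ).aestronglyMeasurable ?_
    filter_upwards [hφbdd] with x ⟨h1, h2, ha0, ha1, _, _⟩
    rw [Real.norm_eq_abs, abs_of_nonneg (mul_nonneg ha0 (Real.sqrt_nonneg _))]
    calc a x * φ x ≤ 1 * φ x := by
          apply mul_le_mul_of_nonneg_right ha1 (Real.sqrt_nonneg _)
      _ = φ x := one_mul _
      _ ≤ c⁻¹ := h2
  have Ibψ : Integrable (fun x => b x * ψ x) σ := by
    refine Integrable.mono' (integrable_const c⁻¹) (hmb.mul hmψ).aestronglyMeasurable ?_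
    filter_upwards [hφbdd] with x ⟨h1, h2, _, _, hb0, hb1⟩
    rw [Real.norm_eq_abs, abs_of_nonneg (mul_nonneg hb0 (Real.sqrt_nonneg _))]
    have hψle : ψ x ≤ c⁻¹ := by
      rw [hψφ x]
      exact inv_anti₀ hc0 h1
    calc b x * ψ x ≤ 1 * ψ x := by
          apply mul_le_mul_of_nonneg_right hb1 (Real.sqrt_nonneg _)
      _ = ψ x := one_mul _
      _ ≤ c⁻¹ := hψle
  have Iaf : Integrable (fun x => a x * f x) σ := by
    refine Integrable.mono' (integrable_const c⁻¹) (hma.mul hfcont.measurable).aestronglyMeasurable ?_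
    filter_upwards [hφbdd] with x ⟨_, _, ha0, ha1, _, _⟩
    rw [Real.norm_eq_abs, abs_of_nonneg (mul_nonneg ha0 (le_trans hc0.le (hfc x)))]
    calc a x * f x ≤ 1 * f x := mul_le_mul_of_nonneg_right ha1 (le_trans hc0.le (hfc x))
      _ = f x := one_mul _
      _ ≤ c⁻¹ := hfC x
  have Ibg : Integrable (fun x => b x * g x) σ := by
    refine Integrable.mono' (integrable_const c⁻¹) (hmb.mul hgcont.measurable).aestronglyMeasurable ?_
    filter_upwards [hφbdd] with x ⟨_, _, _, _, hb0, hb1⟩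
    rw [Real.norm_eq_abs, abs_of_nonneg (mul_nonneg hb0 (hg0 x))]
    calc b x * g x ≤ 1 * g x := mul_le_mul_of_nonneg_right hb1 (hg0 x)
      _ = g x := one_mul _
      _ ≤ c⁻¹ := hgC x
  -- the F-bound
  have hF : (∫ x, (a x * φ x + b x * ψ x) ∂σ) ≤ 2 * affinity μ ν + ε := hn
  have hFsplit : ∫ x, (a x * φ x + b x * ψ x) ∂σ
      = ∫ x, a x * φ x ∂σ + ∫ x, b x * ψ x ∂σ := integral_add Iaφ Ibψ
  -- approximation error
  set E : ℝ := ∫ x, |h x - φ x| ∂σ with hEdef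
  have hE0 : 0 ≤ E := integral_nonneg fun x => abs_nonneg _
  have hEε : E ≤ ε₁ := by
    rw [hEdef]
    have : (fun x => |h x - φ x|) = fun x => ‖φ x - h x‖ := by
      funext x; rw [Real.norm_eq_abs, abs_sub_comm]
    rw [this]
    exact hhint
  -- comparison of integrals
  have E1 : ∫ x, a x * f x ∂σ ≤ ∫ x, a x * φ x ∂σ + E := by
    rw [hEdef, ← integral_add Iaφ Ihφ]
    exact integral_mono_ae Iaf (Iaφ.add Ihφ) hae1
  have E2 : ∫ x, b x * g x ∂σ ≤ ∫ x, b x * ψ x ∂σ + E / c ^ 2 := by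
    have : ∫ x, (b x * ψ x + |h x - φ x| / c ^ 2) ∂σ
        = ∫ x, b x * ψ x ∂σ + E / c ^ 2 := by
      rw [integral_add Ibψ (Ihφ.div_const _), integral_div]
    rw [← this]
    exact integral_mono_ae Ibg (Ibψ.add (Ihφ.div_const _)) hae2
  -- identify with integrals against μ, ν
  have I1 : ∫ x, f x ∂μ = ∫ x, a x * f x ∂σ := by
    rw [← MeasureTheory.integral_rnDeriv_smul hμσ]
    simp [smul_eq_mul]
    rfl
  have I2 : ∫ x, g x ∂ν = ∫ x, b x * g x ∂σ := by
    rw [← MeasureTheory.integral_rnDeriv_smul hνσ]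
    simp [smul_eq_mul]
    rfl
  -- final numeric bound
  have hεE : E + E / c ^ 2 ≤ ε / 2 := by
    have h1 : E + E / c ^ 2 ≤ ε₁ + ε₁ / c ^ 2 := by gcongr
    have h2 : ε₁ + ε₁ / c ^ 2 = ε / 2 := by
      rw [hε₁def]; field_simp; ring
    linarith
  have main : ∫ x, f x ∂μ + ∫ x, g x ∂ν ≤ 2 * affinity μ ν + 2 * ε := by
    rw [I1, I2]
    have := hF
    rw [hFsplit] at this
    linarith
  -- package as bounded continuous functions
  refine ⟨BoundedContinuousFunction.mkOfCompact ⟨f, hfcont⟩,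
    BoundedContinuousFunction.mkOfCompact ⟨g, hgcont⟩, ?_, ?_, ?_, ?_⟩
  · intro x; simpa using le_trans hc0.le (hfc x)
  · intro x; simpa using hg0 x
  · intro x
    simp only [BoundedContinuousFunction.mkOfCompact_apply, ContinuousMap.coe_mk]
    rw [hgdef]
    rw [mul_inv_cancel₀ (ne_of_gt (lt_of_lt_of_le hc0 (hfc x)))]
  · simp only [BoundedContinuousFunction.mkOfCompact_apply, ContinuousMap.coe_mk]
    linarith

/-- **Upper semicontinuity of the affinity under weak-star convergence.**
If `(μ_t)` and `(ν_t)` are families of finite Borel measures on a compact metrizable space `D`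
(e.g. the fundamental domain of a lattice, identified with the torus `ℝ^d/L`) converging
weak-star to finite measures `μ` and `ν` as `t → ∞`, then
`limsup_{t→∞} ρ(μ_t, ν_t) ≤ ρ(μ, ν)`. -/
theorem affinity_usc_weak_star
    {D : Type*} [TopologicalSpace D] [CompactSpace D] [TopologicalSpace.MetrizableSpace D]
    [MeasurableSpace D] [BorelSpace D]
    (μt νt : ℝ → Measure D) (μ ν : Measure D)
    [∀ t, IsFiniteMeasure (μt t)] [∀ t, IsFiniteMeasure (νt t)]
    [IsFiniteMeasure μ] [IsFiniteMeasure ν]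
    (hμ : ∀ f : BoundedContinuousFunction D ℝ,
      Tendsto (fun t : ℝ => ∫ x, f x ∂(μt t)) atTop (𝓝 (∫ x, f x ∂μ)))
    (hν : ∀ f : BoundedContinuousFunction D ℝ,
      Tendsto (fun t : ℝ => ∫ x, f x ∂(νt t)) atTop (𝓝 (∫ x, f x ∂ν))) :
    Filter.limsup (fun t : ℝ => affinity (μt t) (νt t)) atTop ≤ affinity μ ν := by
  have hnn : ∀ t, 0 ≤ affinity (μt t) (νt t) := fun t =>
    integral_nonneg fun x => mul_nonneg (Real.sqrt_nonneg _) (Real.sqrt_nonneg _)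
  refine le_of_forall_pos_le_add fun ε hε => ?_
  obtain ⟨f, g, hf0, hg0, hfg, hbound⟩ := exists_test_functions μ ν hε
  have key : ∀ t, affinity (μt t) (νt t) ≤ (∫ x, f x ∂(μt t) + ∫ x, g x ∂(νt t)) / 2 := fun t =>
    affinity_le_half_add _ _ (f.integrable _) (g.integrable _) hf0 hg0 hfg
  have conv : Tendsto (fun t : ℝ => (∫ x, f x ∂(μt t) + ∫ x, g x ∂(νt t)) / 2) atTop
      (𝓝 ((∫ x, f x ∂μ + ∫ x, g x ∂ν) / 2)) := ((hμ f).add (hν g)).div_const 2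
  have h1 : Filter.limsup (fun t : ℝ => affinity (μt t) (νt t)) atTop
      ≤ Filter.limsup (fun t : ℝ => (∫ x, f x ∂(μt t) + ∫ x, g x ∂(νt t)) / 2) atTop := by
    refine limsup_le_limsup (Eventually.of_forall key) ?_ ?_
    · exact isCoboundedUnder_le_of_eventually_le atTop (Eventually.of_forall fun t => hnn t)
    · exact conv.isBoundedUnder_le
  rw [conv.limsup_eq] at h1
  linarith


end
end

section
/- For every λ ∈ ℝ^d, lim_{R→∞} (1/m_d(B_R)) · Σ_{n ∈ L ∩ B_R} conj(e(⟨n,λ⟩)) equals 1 if λ ∈ L*, and equals 0 if λ ∉ L*. -/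
open MeasureTheory Filter Topology
open scoped RealInnerProductSpace ENNReal Pointwise

noncomputable section

/-- `e(t) = exp(2πit)`. -/
def expChar (t : ℝ) : ℂ := Complex.exp (2 * Real.pi * Complex.I * t)

/-- Lebesgue measure of the closed ball of radius `R` in `ℝ^d`. -/
def ballVol (d : ℕ) (R : ℝ) : ℝ :=
  (volume (Metric.closedBall (0 : EuclideanSpace ℝ (Fin d)) R)).toReal

/-- Membership of `lam` in the dual lattice `L*`. -/
def memDual {d : ℕ} (b : Module.Basis (Fin d) ℝ (EuclideanSpace ℝ (Fin d)))
    (lam : EuclideanSpace ℝ (Fin d)) : Prop :=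
  ∀ n : Fin d → ℤ, ∃ z : ℤ, ⟪latPt b n, lam⟫ = (z : ℝ)

variable {d : ℕ} (b : Module.Basis (Fin d) ℝ (EuclideanSpace ℝ (Fin d)))
variable {d : ℕ} (b : Module.Basis (Fin d) ℝ (EuclideanSpace ℝ (Fin d)))

lemma latPt_eq (n : Fin d → ℤ) : latPt b n = b.equivFun.symm (fun i => (n i : ℝ)) := by
  simp [latPt, Module.Basis.equivFun_symm_apply]

lemma latPt_inj : Function.Injective (latPt b) := by
  intro n m h
  rw [latPt_eq, latPt_eq] at h
  have := b.equivFun.symm.injective h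
  funext i
  have := congrFun this i
  exact_mod_cast this

lemma latPt_add (n m : Fin d → ℤ) : latPt b (n + m) = latPt b n + latPt b m := by
  simp [latPt, ← Finset.sum_add_distrib, add_smul]

lemma latPt_mem_span (n : Fin d → ℤ) : latPt b n ∈ Submodule.span ℤ (Set.range b) := by
  apply Submodule.sum_mem
  intro i _
  rw [Int.cast_smul_eq_zsmul ℝ]
  exact Submodule.smul_mem _ _ (Submodule.subset_span (Set.mem_range_self i))

lemma mem_span_iff_latPt (x : EuclideanSpace ℝ (Fin d)) :
    x ∈ Submodule.span ℤ (Set.range b) ↔ ∃ n, latPt b n = x := by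
  constructor
  · intro hx
    obtain ⟨c, hc⟩ := (Submodule.mem_span_range_iff_exists_fun ℤ).mp hx
    exact ⟨c, by rw [← hc]; simp [latPt, Int.cast_smul_eq_zsmul]⟩
  · rintro ⟨n, rfl⟩; exact latPt_mem_span b n

lemma span_isClosed : IsClosed ((Submodule.span ℤ (Set.range b) : Submodule ℤ _) : Set (EuclideanSpace ℝ (Fin d))) := by
  haveI : DiscreteTopology ((Submodule.span ℤ (Set.range b)).toAddSubgroup) :=
    inferInstanceAs (DiscreteTopology (Submodule.span ℤ (Set.range b)))
  exact AddSubgroup.isClosed_of_discrete (H := (Submodule.span ℤ (Set.range b)).toAddSubgroup)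

lemma finite_latPt_le (R : ℝ) : {n : Fin d → ℤ | ‖latPt b n‖ ≤ R}.Finite := by
  have h1 : {n : Fin d → ℤ | ‖latPt b n‖ ≤ R} =
      latPt b ⁻¹' (Metric.closedBall 0 R ∩ (Submodule.span ℤ (Set.range b))) := by
    ext n
    simp [mem_closedBall_zero_iff, latPt_mem_span b n]
  rw [h1]
  haveI : DiscreteTopology ((Submodule.span ℤ (Set.range b) : Submodule ℤ _) :
      Set (EuclideanSpace ℝ (Fin d))) :=
    inferInstanceAs (DiscreteTopology (Submodule.span ℤ (Set.range b)))
  exact Set.Finite.preimage (latPt_inj b).injOn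
    (Metric.finite_isBounded_inter_isClosed DiscreteTopology.isDiscrete Metric.isBounded_closedBall (span_isClosed b))

def latFinset (R : ℝ) : Finset (Fin d → ℤ) := (finite_latPt_le b R).toFinset

lemma mem_latFinset {R : ℝ} {n : Fin d → ℤ} : n ∈ latFinset b R ↔ ‖latPt b n‖ ≤ R := by
  simp [latFinset]

lemma vol_biUnion (hcovol : volume (ZSpan.fundamentalDomain b) = 1) (R : ℝ) :
    volume (⋃ n ∈ latFinset b R, latPt b n +ᵥ ZSpan.fundamentalDomain b)
      = ((latFinset b R).card : ℝ≥0∞) := by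
  rw [measure_biUnion_finset]
  · simp [measure_vadd, hcovol]
  · intro n _ m _ hnm
    refine Set.disjoint_left.mpr fun x hx hx' => hnm ?_
    rw [Set.mem_vadd_set_iff_neg_vadd_mem] at hx hx'
    obtain ⟨v, hv, huniq⟩ := ZSpan.exist_unique_vadd_mem_fundamentalDomain b x
    have h1 : (-(⟨latPt b n, latPt_mem_span b n⟩ : Submodule.span ℤ (Set.range b))) = v :=
      huniq _ hx
    have h2 : (-(⟨latPt b m, latPt_mem_span b m⟩ : Submodule.span ℤ (Set.range b))) = v :=
      huniq _ hx'
    have := h1.trans h2.symm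
    have : latPt b n = latPt b m := by
      simpa [Subtype.ext_iff] using this
    exact latPt_inj b this
  · intro n _
    exact (ZSpan.fundamentalDomain_measurableSet b).const_vadd _

lemma card_le_vol (hcovol : volume (ZSpan.fundamentalDomain b) = 1) {M : ℝ}
    (hM : ZSpan.fundamentalDomain b ⊆ Metric.closedBall 0 M) (R : ℝ) :
    ((latFinset b R).card : ℝ≥0∞)
      ≤ volume (Metric.closedBall (0 : EuclideanSpace ℝ (Fin d)) (R + M)) := by
  rw [← vol_biUnion b hcovol R]
  refine measure_mono ?_
  intro x hx
  simp only [Set.mem_iUnion] at hx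
  obtain ⟨n, hn, hx⟩ := hx
  obtain ⟨y, hy, rfl⟩ := hx
  rw [mem_closedBall_zero_iff]
  have h1 : ‖y‖ ≤ M := mem_closedBall_zero_iff.mp (hM hy)
  have h2 : ‖latPt b n‖ ≤ R := (mem_latFinset b).mp hn
  calc ‖latPt b n +ᵥ y‖ ≤ ‖latPt b n‖ + ‖y‖ := norm_add_le _ _
    _ ≤ R + M := add_le_add h2 h1

lemma vol_le_card (hcovol : volume (ZSpan.fundamentalDomain b) = 1) {M : ℝ}
    (hM : ZSpan.fundamentalDomain b ⊆ Metric.closedBall 0 M) (R : ℝ) :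
    volume (Metric.closedBall (0 : EuclideanSpace ℝ (Fin d)) (R - M))
      ≤ ((latFinset b R).card : ℝ≥0∞) := by
  rw [← vol_biUnion b hcovol R]
  refine measure_mono ?_
  intro y hy
  rw [mem_closedBall_zero_iff] at hy
  obtain ⟨v, hv, -⟩ := ZSpan.exist_unique_vadd_mem_fundamentalDomain b y
  obtain ⟨n, hn⟩ := (mem_span_iff_latPt b (-(v : EuclideanSpace ℝ (Fin d)))).mp
    (neg_mem v.2)
  have hvy : ‖(v : EuclideanSpace ℝ (Fin d)) + y‖ ≤ M := mem_closedBall_zero_iff.mp (hM hv)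
  have hnorm : ‖latPt b n‖ ≤ R := by
    rw [hn]
    have : -(v : EuclideanSpace ℝ (Fin d)) = -((v : EuclideanSpace ℝ (Fin d)) + y) + y := by abel
    rw [this]
    calc ‖-((v : EuclideanSpace ℝ (Fin d)) + y) + y‖
        ≤ ‖-((v : EuclideanSpace ℝ (Fin d)) + y)‖ + ‖y‖ := norm_add_le _ _
      _ = ‖(v : EuclideanSpace ℝ (Fin d)) + y‖ + ‖y‖ := by rw [norm_neg]
      _ ≤ M + (R - M) := add_le_add hvy hy
      _ = R := by ring
  simp only [Set.mem_iUnion]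
  refine ⟨n, (mem_latFinset b).mpr hnorm, ?_⟩
  rw [Set.mem_vadd_set_iff_neg_vadd_mem, hn, neg_neg]
  exact hv

lemma vol_cb_ne_top (d : ℕ) (R : ℝ) :
    volume (Metric.closedBall (0 : EuclideanSpace ℝ (Fin d)) R) ≠ ⊤ :=
  (Metric.isBounded_closedBall.measure_lt_top).ne

lemma ballVol_eq {R : ℝ} (hR : 0 ≤ R) : ballVol d R = R ^ d * ballVol d 1 := by
  unfold ballVol
  rw [Measure.addHaar_closedBall' _ _ hR, ENNReal.toReal_mul, ENNReal.toReal_ofReal (by positivity),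
    finrank_euclideanSpace_fin]

lemma ballVol_pos {R : ℝ} (hR : 0 < R) : 0 < ballVol d R := by
  apply ENNReal.toReal_pos _ (vol_cb_ne_top d R)
  exact (Metric.measure_closedBall_pos volume 0 hR).ne'

lemma card_bounds (hcovol : volume (ZSpan.fundamentalDomain b) = 1) {M : ℝ}
    (hM : ZSpan.fundamentalDomain b ⊆ Metric.closedBall 0 M) (R : ℝ) :
    ballVol d (R - M) ≤ ((latFinset b R).card : ℝ) ∧
      ((latFinset b R).card : ℝ) ≤ ballVol d (R + M) := by
  constructor
  · have := vol_le_card b hcovol hM R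
    have h := ENNReal.toReal_mono (by simp) this
    simpa [ballVol] using h
  · have := card_le_vol b hcovol hM R
    have h := ENNReal.toReal_mono (vol_cb_ne_top d (R + M)) this
    simpa [ballVol] using h

lemma tendsto_ratio_pow (c : ℝ) (d : ℕ) :
    Tendsto (fun R : ℝ => ((R + c) / R) ^ d) atTop (𝓝 1) := by
  have h1 : Tendsto (fun R : ℝ => (R + c) / R) atTop (𝓝 1) := by
    have h2 : Tendsto (fun R : ℝ => 1 + c * R⁻¹) atTop (𝓝 1) := by
      simpa using tendsto_const_nhds.add ((tendsto_inv_atTop_zero (𝕜 := ℝ)).const_mul c)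
    refine h2.congr' ?_
    filter_upwards [eventually_gt_atTop 0] with R hR
    field_simp
  simpa using h1.pow d

lemma tendsto_count (hd : 0 < d) (hcovol : volume (ZSpan.fundamentalDomain b) = 1) :
    Tendsto (fun R : ℝ => ((latFinset b R).card : ℝ) / ballVol d R) atTop (𝓝 1) := by
  obtain ⟨M, hM⟩ := (ZSpan.fundamentalDomain_isBounded b).subset_closedBall 0
  have hM0 : 0 ≤ M := by
    have := hM (ZSpan.fract_mem_fundamentalDomain b 0)
    have h0 := mem_closedBall_zero_iff.mp this
    exact le_trans (norm_nonneg _) h0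
  refine tendsto_of_tendsto_of_tendsto_of_le_of_le'
    ((tendsto_ratio_pow (-M) d)) ((tendsto_ratio_pow M d)) ?_ ?_
  · filter_upwards [eventually_ge_atTop (M + 1)] with R hR
    have hR0 : 0 < R := by linarith
    have h1 : 0 ≤ R - M := by linarith
    have hb : ballVol d R = R ^ d * ballVol d 1 := ballVol_eq hR0.le
    have hb1 : 0 < ballVol d 1 := ballVol_pos one_pos
    have hlow := (card_bounds b hcovol hM R).1
    rw [ballVol_eq h1] at hlow
    rw [hb, div_pow, div_le_div_iff₀ (by positivity) (by positivity)]
    calc (R + -M) ^ d * (R ^ d * ballVol d 1)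
        = ((R - M) ^ d * ballVol d 1) * R ^ d := by ring_nf
      _ ≤ (latFinset b R).card * R ^ d := by
          apply mul_le_mul_of_nonneg_right hlow (by positivity)
  · filter_upwards [eventually_ge_atTop 1] with R hR
    have hR0 : 0 < R := by linarith
    have hb : ballVol d R = R ^ d * ballVol d 1 := ballVol_eq hR0.le
    have hb1 : 0 < ballVol d 1 := ballVol_pos one_pos
    have hup := (card_bounds b hcovol hM R).2
    rw [ballVol_eq (by linarith : (0:ℝ) ≤ R + M)] at hup
    rw [hb, div_pow, div_le_div_iff₀ (by positivity) (by positivity)]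
    calc ((latFinset b R).card : ℝ) * R ^ d
        ≤ ((R + M) ^ d * ballVol d 1) * R ^ d := by
          apply mul_le_mul_of_nonneg_right hup (by positivity)
      _ = (R + M) ^ d * (R ^ d * ballVol d 1) := by ring

lemma tendsto_vol_ratio (c : ℝ) (d : ℕ) :
    Tendsto (fun R : ℝ => ballVol d (R + c) / ballVol d R) atTop (𝓝 1) := by
  refine (tendsto_ratio_pow c d).congr' ?_
  filter_upwards [eventually_ge_atTop (max 1 (-c))] with R hR
  rw [max_le_iff] at hR
  have hR0 : 0 < R := lt_of_lt_of_le one_pos hR.1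
  have hRc : 0 ≤ R + c := by linarith [hR.2]
  rw [ballVol_eq hRc, ballVol_eq hR0.le, div_pow]
  rw [mul_div_mul_right _ _ (ballVol_pos (d := d) one_pos).ne']

lemma tendsto_shift (hd : 0 < d) (hcovol : volume (ZSpan.fundamentalDomain b) = 1) (c : ℝ) :
    Tendsto (fun R : ℝ => ((latFinset b (R + c)).card : ℝ) / ballVol d R) atTop (𝓝 1) := by
  have h1 : Tendsto (fun R : ℝ => ((latFinset b (R + c)).card : ℝ) / ballVol d (R + c))
      atTop (𝓝 1) :=
    (tendsto_count b hd hcovol).comp (tendsto_atTop_add_const_right atTop c tendsto_id)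
  have h2 := h1.mul (tendsto_vol_ratio c d)
  rw [mul_one] at h2
  refine h2.congr' ?_
  filter_upwards [eventually_ge_atTop (max 1 (1 - c))] with R hR
  rw [max_le_iff] at hR
  have hRc : 0 < R + c := by linarith [hR.2]
  have hR0 : 0 < R := lt_of_lt_of_le one_pos hR.1
  rw [div_mul_div_comm, mul_comm (ballVol d (R + c)), mul_div_mul_right _ _ (ballVol_pos hRc).ne']

lemma expChar_add (s t : ℝ) : expChar (s + t) = expChar s * expChar t := by
  rw [expChar, expChar, expChar, Complex.ofReal_add, mul_add, Complex.exp_add]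

lemma norm_expChar (t : ℝ) : ‖expChar t‖ = 1 := by
  rw [expChar, Complex.norm_exp]
  have : (2 * Real.pi * Complex.I * (t : ℂ)).re = 0 := by simp [Complex.mul_re]
  rw [this, Real.exp_zero]

lemma expChar_int (z : ℤ) : expChar (z : ℝ) = 1 := by
  rw [expChar]
  have : 2 * Real.pi * Complex.I * ((z : ℝ) : ℂ) = (z : ℂ) * (2 * Real.pi * Complex.I) := by
    push_cast; ring
  rw [this, Complex.exp_int_mul_two_pi_mul_I]

lemma expChar_ne_one {t : ℝ} (h : ∀ z : ℤ, t ≠ (z : ℝ)) : expChar t ≠ 1 := by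
  intro hc
  rw [expChar, Complex.exp_eq_one_iff] at hc
  obtain ⟨n, hn⟩ := hc
  have h2 : (2 * Real.pi * Complex.I) ≠ 0 := by
    simp [Real.pi_ne_zero, Complex.I_ne_zero, Complex.ext_iff]
  have h3 : ((t : ℂ)) * (2 * Real.pi * Complex.I) = (n : ℂ) * (2 * Real.pi * Complex.I) := by
    rw [← hn]; ring
  have := mul_right_cancel₀ h2 h3
  exact h n (by exact_mod_cast this)

def charFn (lam : EuclideanSpace ℝ (Fin d)) (n : Fin d → ℤ) : ℂ :=
  (starRingEnd ℂ) (expChar ⟪latPt b n, lam⟫)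

lemma norm_charFn (lam : EuclideanSpace ℝ (Fin d)) (n : Fin d → ℤ) : ‖charFn b lam n‖ = 1 := by
  rw [charFn, RCLike.norm_conj, norm_expChar]

lemma charFn_add (lam : EuclideanSpace ℝ (Fin d)) (n m : Fin d → ℤ) :
    charFn b lam (n + m) = charFn b lam n * charFn b lam m := by
  rw [charFn, charFn, charFn, latPt_add, inner_add_left, expChar_add, map_mul]

lemma norm_sum_le_card (lam : EuclideanSpace ℝ (Fin d)) (s : Finset (Fin d → ℤ)) :
    ‖∑ n ∈ s, charFn b lam n‖ ≤ (s.card : ℝ) := by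
  calc ‖∑ n ∈ s, charFn b lam n‖ ≤ ∑ n ∈ s, ‖charFn b lam n‖ := norm_sum_le _ _
    _ = ∑ _n ∈ s, (1:ℝ) := Finset.sum_congr rfl fun n _ => norm_charFn b lam n
    _ = (s.card : ℝ) := by simp

lemma sum_mul_sub_bound (lam : EuclideanSpace ℝ (Fin d)) (m : Fin d → ℤ) (R : ℝ) :
    ‖(∑ n ∈ latFinset b R, charFn b lam n) * (charFn b lam m - 1)‖ ≤
      2 * (((latFinset b (R + ‖latPt b m‖)).card : ℝ) -
        ((latFinset b (R - ‖latPt b m‖)).card : ℝ)) := by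
  set c : ℝ := ‖latPt b m‖ with hc
  have hc0 : 0 ≤ c := norm_nonneg _
  set s : Finset (Fin d → ℤ) := latFinset b R
  set t : Finset (Fin d → ℤ) := s.image (· + m) with ht
  set u : Finset (Fin d → ℤ) := latFinset b (R - c)
  set p : Finset (Fin d → ℤ) := latFinset b (R + c)
  have hinj : Function.Injective (· + m) := fun a a' h => by
    simpa using congrArg (· - m) h
  have hsp : s ⊆ p := fun n hn => by
    rw [mem_latFinset] at hn ⊢; linarith
  have htp : t ⊆ p := by
    intro n hn
    rw [ht, Finset.mem_image] at hn
    obtain ⟨a, ha, rfl⟩ := hn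
    rw [mem_latFinset] at ha ⊢
    calc ‖latPt b (a + m)‖ = ‖latPt b a + latPt b m‖ := by rw [latPt_add]
      _ ≤ ‖latPt b a‖ + c := norm_add_le _ _
      _ ≤ R + c := by linarith
  have hus : u ⊆ s := fun n hn => by
    rw [mem_latFinset] at hn ⊢; linarith
  have hut : u ⊆ t := by
    intro n hn
    rw [mem_latFinset] at hn
    rw [ht, Finset.mem_image]
    have hnm : n - m + m = n := by abel
    refine ⟨n - m, ?_, hnm⟩
    rw [mem_latFinset]
    have hsplit : latPt b (n - m) = latPt b n - latPt b m := by
      have := latPt_add b (n - m) m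
      rw [hnm] at this
      rw [this]
      abel
    have h2 : ‖latPt b (n - m)‖ ≤ ‖latPt b n‖ + c := by
      rw [hsplit]
      exact norm_sub_le _ _
    linarith
  have hω : (charFn b lam m) * ∑ n ∈ s, charFn b lam n = ∑ n ∈ t, charFn b lam n := by
    rw [ht, Finset.sum_image (fun a _ a' _ h => hinj h), Finset.mul_sum]
    exact Finset.sum_congr rfl fun n _ => by rw [charFn_add]; ring
  have key : (∑ n ∈ s, charFn b lam n) * (charFn b lam m - 1) =
      (∑ n ∈ t \ u, charFn b lam n) - (∑ n ∈ s \ u, charFn b lam n) := by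
    rw [Finset.sum_sdiff_eq_sub hut, Finset.sum_sdiff_eq_sub hus]
    rw [mul_sub, mul_one, mul_comm, hω]
    ring
  rw [key]
  have hcard_t : t.card = s.card := Finset.card_image_of_injective _ hinj
  have h1 : ‖∑ n ∈ t \ u, charFn b lam n‖ ≤ (p.card : ℝ) - (u.card : ℝ) := by
    refine le_trans (norm_sum_le_card b lam _) ?_
    rw [Finset.card_sdiff_of_subset hut, Nat.cast_sub (Finset.card_le_card hut), hcard_t]
    have := Finset.card_le_card hsp
    have := Finset.card_le_card hus
    push_cast
    gcongr
  have h2 : ‖∑ n ∈ s \ u, charFn b lam n‖ ≤ (p.card : ℝ) - (u.card : ℝ) := by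
    refine le_trans (norm_sum_le_card b lam _) ?_
    rw [Finset.card_sdiff_of_subset hus, Nat.cast_sub (Finset.card_le_card hus)]
    have := Finset.card_le_card hsp
    push_cast
    gcongr
  calc ‖(∑ n ∈ t \ u, charFn b lam n) - ∑ n ∈ s \ u, charFn b lam n‖
      ≤ ‖∑ n ∈ t \ u, charFn b lam n‖ + ‖∑ n ∈ s \ u, charFn b lam n‖ := norm_sub_le _ _
    _ ≤ 2 * ((p.card : ℝ) - (u.card : ℝ)) := by linarith

lemma finsum_eq_latFinset_sum (lam : EuclideanSpace ℝ (Fin d)) (R : ℝ) :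
    (∑ᶠ (n : Fin d → ℤ) (_ : ‖latPt b n‖ ≤ R),
      (starRingEnd ℂ) (expChar ⟪latPt b n, lam⟫)) = ∑ n ∈ latFinset b R, charFn b lam n := by
  show (∑ᶠ n ∈ {n : Fin d → ℤ | ‖latPt b n‖ ≤ R},
      (starRingEnd ℂ) (expChar ⟪latPt b n, lam⟫)) = _
  rw [← Set.Finite.coe_toFinset (finite_latPt_le b R), finsum_mem_coe_finset]
  rfl


/-- For every `λ ∈ ℝ^d`, the exponential average over the lattice
`(1/m_d(B_R)) Σ_{n ∈ L ∩ B_R} conj(e(⟨n,λ⟩))` tends to `1` if `λ ∈ L*` and to `0`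
otherwise. -/
theorem lattice_exponential_average
    {d : ℕ} (hd : 0 < d)
    (b : Module.Basis (Fin d) ℝ (EuclideanSpace ℝ (Fin d)))
    (hcovol : volume (ZSpan.fundamentalDomain b) = 1) :
    ∀ lam : EuclideanSpace ℝ (Fin d),
      (memDual b lam →
        Tendsto
          (fun R : ℝ => (ballVol d R)⁻¹ •
            ∑ᶠ n ∈ {n : Fin d → ℤ | ‖latPt b n‖ ≤ R},
              (starRingEnd ℂ) (expChar ⟪latPt b n, lam⟫))
          atTop (𝓝 1)) ∧
      (¬ memDual b lam →
        Tendsto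
          (fun R : ℝ => (ballVol d R)⁻¹ •
            ∑ᶠ n ∈ {n : Fin d → ℤ | ‖latPt b n‖ ≤ R},
              (starRingEnd ℂ) (expChar ⟪latPt b n, lam⟫))
          atTop (𝓝 0)) := by
  intro lam
  constructor
  · intro hmem
    have hone : ∀ n, charFn b lam n = 1 := by
      intro n
      obtain ⟨z, hz⟩ := hmem n
      rw [charFn, hz, expChar_int, map_one]
    have hsumval : ∀ R : ℝ, (∑ n ∈ latFinset b R, charFn b lam n)
        = ((latFinset b R).card : ℂ) := by
      intro R
      rw [Finset.sum_congr rfl fun n _ => hone n]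
      simp
    have hmain := tendsto_count b hd hcovol
    have h2 := (Complex.continuous_ofReal.tendsto 1).comp hmain
    rw [Complex.ofReal_one] at h2
    refine h2.congr' ?_
    filter_upwards with R
    rw [Function.comp_apply, finsum_eq_latFinset_sum, hsumval R, Complex.real_smul]
    push_cast
    rw [div_eq_inv_mul]
  · intro hnot
    rw [memDual] at hnot
    push_neg at hnot
    obtain ⟨m, hm⟩ := hnot
    have hω : charFn b lam m ≠ 1 := by
      rw [charFn]
      intro h
      have h2 := congrArg (starRingEnd ℂ) h
      simp only [map_one, RingHomCompTriple.comp_apply, RingHom.id_apply] at h2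
      exact expChar_ne_one hm h2
    set c : ℝ := ‖latPt b m‖ with hc
    set ε : ℝ := ‖charFn b lam m - 1‖ with hε
    have hεpos : 0 < ε := norm_pos_iff.mpr (sub_ne_zero.mpr hω)
    have hg : Tendsto (fun R : ℝ => (2 / ε) *
        ((((latFinset b (R + c)).card : ℝ) / ballVol d R) -
          (((latFinset b (R - c)).card : ℝ) / ballVol d R))) atTop (𝓝 0) := by
      have h1 := tendsto_shift b hd hcovol c
      have h2 := tendsto_shift b hd hcovol (-c)
      have h2' : Tendsto (fun R : ℝ => ((latFinset b (R - c)).card : ℝ) / ballVol d R)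
          atTop (𝓝 1) := by
        refine h2.congr ?_
        intro R
        rw [sub_eq_add_neg]
      have h3 := (h1.sub h2').const_mul (2 / ε)
      simpa using h3
    refine squeeze_zero_norm' ?_ hg
    filter_upwards [eventually_gt_atTop 0] with R hR
    have hb := ballVol_pos (d := d) hR
    have hsum := sum_mul_sub_bound b lam m R
    rw [norm_mul, ← hε, ← hc] at hsum
    have hS : ‖∑ n ∈ latFinset b R, charFn b lam n‖ ≤
        2 * (((latFinset b (R + c)).card : ℝ) - ((latFinset b (R - c)).card : ℝ)) / ε := by
      rw [le_div_iff₀ hεpos]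
      exact hsum
    rw [finsum_eq_latFinset_sum]
    calc ‖(ballVol d R)⁻¹ • ∑ n ∈ latFinset b R, charFn b lam n‖
        = (ballVol d R)⁻¹ * ‖∑ n ∈ latFinset b R, charFn b lam n‖ := by
          rw [norm_smul, Real.norm_eq_abs, abs_of_nonneg (inv_nonneg.mpr hb.le)]
      _ ≤ (ballVol d R)⁻¹ *
          (2 * (((latFinset b (R + c)).card : ℝ) - ((latFinset b (R - c)).card : ℝ)) / ε) := by
          exact mul_le_mul_of_nonneg_left hS (inv_nonneg.mpr hb.le)
      _ = (2 / ε) * ((((latFinset b (R + c)).card : ℝ) / ballVol d R) -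
          (((latFinset b (R - c)).card : ℝ) / ballVol d R)) := by
          rw [← sub_div]
          ring

end
end
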